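/- Fix u = (v,w) ∈ ℝ^m × Ker A^D. Define f̃ : {x ∈ ℝ^m : |x| < 1} → ℝ^m by f̃(x,w) = (1 − |x|²)² f(x/(1 − |x|²), w). Then the autonomous system dx/ds = (1 + R(s)²) f̃(x,w) − 2 (x · f̃(x,w)) x, where R(s) = |x(s)|, with initial condition x(0) = 2v/(1 + sqrt(1 + 4|v|²)), admits a solution defined for all s ≥ 0 that satisfies R(s) < 1 for every finite s, and the blow-up time of the Riccati system satisfies T*(u) = ∫_0^∞ (1 − R(s)⁴) ds. -/

import Mathlib

open Filter Topology MeasureTheory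

noncomputable section

/-- `g_i(w) = (1/2) wᵀ π_i w + (A^C w)_i`. -/
def gfun {m n : ℕ} (π : Fin m → Matrix (Fin n) (Fin n) ℝ)
    (AC : Matrix (Fin m) (Fin n) ℝ) (w : Fin n → ℝ) (i : Fin m) : ℝ :=
  (1 / 2) * (∑ j, ∑ k, w j * π i j k * w k) + ∑ j, AC i j * w j

/-- `f_i(v,w) = (1/2) v_i² 1_{i∈I} + Σ_{k ≤ i} A^V_{ik} v_k + g_i(w)`. -/
def fRic {m n : ℕ} (I : Finset (Fin m)) (AV : Matrix (Fin m) (Fin m) ℝ)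
    (π : Fin m → Matrix (Fin n) (Fin n) ℝ) (AC : Matrix (Fin m) (Fin n) ℝ)
    (v : Fin m → ℝ) (w : Fin n → ℝ) (i : Fin m) : ℝ :=
  (1 / 2) * (v i) ^ 2 * (if i ∈ I then 1 else 0)
    + (∑ k ∈ Finset.univ.filter (fun k => k ≤ i), AV i k * v k)
    + gfun π AC w i

/-- `E(w) = {v : f_i(v,w) ≤ 0 ∀ i}`. -/
def Eset {m n : ℕ} (I : Finset (Fin m)) (AV : Matrix (Fin m) (Fin m) ℝ)
    (π : Fin m → Matrix (Fin n) (Fin n) ℝ) (AC : Matrix (Fin m) (Fin n) ℝ)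
    (w : Fin n → ℝ) : Set (Fin m → ℝ) :=
  {v | ∀ i, fRic I AV π AC v w i ≤ 0}

/-- `E°(w) = {v : f_i(v,w) < 0 ∀ i}`. -/
def EsetO {m n : ℕ} (I : Finset (Fin m)) (AV : Matrix (Fin m) (Fin m) ℝ)
    (π : Fin m → Matrix (Fin n) (Fin n) ℝ) (AC : Matrix (Fin m) (Fin n) ℝ)
    (w : Fin n → ℝ) : Set (Fin m → ℝ) :=
  {v | ∀ i, fRic I AV π AC v w i < 0}

/-- `𝔇 = {w ∈ Ker A^D : E(w) ≠ ∅}`. -/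
def Dset {m n : ℕ} (I : Finset (Fin m)) (AV : Matrix (Fin m) (Fin m) ℝ)
    (π : Fin m → Matrix (Fin n) (Fin n) ℝ) (AC : Matrix (Fin m) (Fin n) ℝ)
    (AD : Matrix (Fin n) (Fin n) ℝ) : Set (Fin n → ℝ) :=
  {w | AD.mulVec w = 0 ∧ (Eset I AV π AC w).Nonempty}

/-- `𝔇° = {w ∈ Ker A^D : E°(w) ≠ ∅}`. -/
def DsetO {m n : ℕ} (I : Finset (Fin m)) (AV : Matrix (Fin m) (Fin m) ℝ)
    (π : Fin m → Matrix (Fin n) (Fin n) ℝ) (AC : Matrix (Fin m) (Fin n) ℝ)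
    (AD : Matrix (Fin n) (Fin n) ℝ) : Set (Fin n → ℝ) :=
  {w | AD.mulVec w = 0 ∧ (EsetO I AV π AC w).Nonempty}
open scoped ENNReal

/-- `y` solves `ẏ = F(y)` on `[0,T)`. -/
def SolOn {d : ℕ} (F : (Fin d → ℝ) → (Fin d → ℝ)) (y : ℝ → Fin d → ℝ) (T : ℝ≥0∞) : Prop :=
  ∀ t : ℝ, 0 ≤ t → ENNReal.ofReal t < T → HasDerivAt y (F (y t)) t

/-- `y` is a maximal solution of `ẏ = F(y)`, with lifetime `T`: it is a solution on `[0,T)`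
and no solution with the same initial value exists on a longer interval. -/
def IsMaxSol {d : ℕ} (F : (Fin d → ℝ) → (Fin d → ℝ)) (y : ℝ → Fin d → ℝ) (T : ℝ≥0∞) : Prop :=
  0 < T ∧ SolOn F y T ∧
    ∀ (z : ℝ → Fin d → ℝ) (T' : ℝ≥0∞), T < T' → SolOn F z T' → z 0 ≠ y 0

/-- Lyapunov stability of an equilibrium point. -/
def StablePt {d : ℕ} (F : (Fin d → ℝ) → (Fin d → ℝ)) (ν : Fin d → ℝ) : Prop :=
  ∀ ε : ℝ, 0 < ε → ∃ δ : ℝ, 0 < δ ∧ ∀ (y : ℝ → Fin d → ℝ) (T : ℝ≥0∞),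
    IsMaxSol F y T → ‖y 0 - ν‖ < δ →
      ∀ t : ℝ, 0 < t → ENNReal.ofReal t < T → ‖y t - ν‖ < ε

/-- Asymptotic stability of an equilibrium point. -/
def AsympStablePt {d : ℕ} (F : (Fin d → ℝ) → (Fin d → ℝ)) (ν : Fin d → ℝ) : Prop :=
  StablePt F ν ∧ ∃ δ : ℝ, 0 < δ ∧ ∀ (y : ℝ → Fin d → ℝ) (T : ℝ≥0∞),
    IsMaxSol F y T → ‖y 0 - ν‖ < δ → T = ⊤ ∧ Filter.Tendsto y Filter.atTop (nhds ν)

/-- The compactified vector field `f̃(x,w) = (1 − |x|²)² f(x/(1 − |x|²), w)` (Euclidean norm). -/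
def ftilde {m n : ℕ} (I : Finset (Fin m)) (AV : Matrix (Fin m) (Fin m) ℝ)
    (π : Fin m → Matrix (Fin n) (Fin n) ℝ) (AC : Matrix (Fin m) (Fin n) ℝ)
    (w : Fin n → ℝ) (q : Fin m → ℝ) (i : Fin m) : ℝ :=
  (1 - ∑ j, (q j) ^ 2) ^ 2 *
    fRic I AV π AC (fun j => q j / (1 - ∑ j', (q j') ^ 2)) w i

namespace Stmt14Aux

variable {m : ℕ}

def esq (q : Fin m → ℝ) : ℝ := ∑ j, q j ^ 2
def Sf (q : Fin m → ℝ) : ℝ := Real.sqrt (1 + 4 * esq q)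
def phi (q : Fin m → ℝ) : Fin m → ℝ := fun i => 2 * q i / (1 + Sf q)
def hf (q : Fin m → ℝ) : ℝ := (1 + Sf q) ^ 2 / (4 * Sf q)

lemma esq_nonneg (q : Fin m → ℝ) : 0 ≤ esq q :=
  Finset.sum_nonneg fun j _ => sq_nonneg _

lemma one_le_Sf (q : Fin m → ℝ) : 1 ≤ Sf q := by
  rw [show (1:ℝ) = Real.sqrt 1 by simp]
  exact Real.sqrt_le_sqrt (by nlinarith [esq_nonneg q])

lemma Sf_pos (q : Fin m → ℝ) : 0 < Sf q := lt_of_lt_of_le one_pos (one_le_Sf q)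

lemma Sf_sq (q : Fin m → ℝ) : Sf q ^ 2 = 1 + 4 * esq q :=
  Real.sq_sqrt (by nlinarith [esq_nonneg q])

lemma sq_le_esq (q : Fin m → ℝ) (i : Fin m) : q i ^ 2 ≤ esq q :=
  Finset.single_le_sum (fun j _ => sq_nonneg (q j)) (Finset.mem_univ i)

lemma abs_le_Sf (q : Fin m → ℝ) (i : Fin m) : |q i| ≤ Sf q / 2 := by
  have h1 := sq_le_esq q i
  have h2 := Sf_sq q
  have h3 := Sf_pos q
  have : (2 * |q i|) ^ 2 ≤ Sf q ^ 2 := by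
    rw [mul_pow, sq_abs]; nlinarith
  nlinarith [abs_nonneg (q i), sq_nonneg (2 * |q i| - Sf q), sq_nonneg (2 * |q i| + Sf q)]

lemma esq_phi (q : Fin m → ℝ) : esq (phi q) = 4 * esq q / (1 + Sf q) ^ 2 := by
  have hS := Sf_pos q
  have hP : (1 + Sf q) ≠ 0 := by linarith
  have hP2 : ((1 + Sf q) ^ 2) ≠ 0 := pow_ne_zero 2 hP
  unfold esq phi
  rw [eq_div_iff hP2, Finset.sum_mul]
  rw [Finset.sum_congr rfl (fun j _ => show (2 * q j / (1 + Sf q)) ^ 2 * (1 + Sf q) ^ 2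
      = 4 * q j ^ 2 from by field_simp; ring), ← Finset.mul_sum]

lemma one_sub_esq_phi (q : Fin m → ℝ) : 1 - esq (phi q) = 2 / (1 + Sf q) := by
  have hS := Sf_pos q
  have hP : (0:ℝ) < 1 + Sf q := by linarith
  rw [esq_phi]
  field_simp
  nlinarith [Sf_sq q]

lemma one_add_esq_phi (q : Fin m → ℝ) : 1 + esq (phi q) = 2 * Sf q / (1 + Sf q) := by
  have hS := Sf_pos q
  have hP : (0:ℝ) < 1 + Sf q := by linarith
  rw [esq_phi]
  field_simp
  nlinarith [Sf_sq q]

lemma esq_phi_lt_one (q : Fin m → ℝ) : esq (phi q) < 1 := by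
  have hS := Sf_pos q
  have hP : (0:ℝ) < 1 + Sf q := by linarith
  have := one_sub_esq_phi q
  have : 0 < 2 / (1 + Sf q) := by positivity
  linarith [one_sub_esq_phi q ▸ this]

lemma phi_div (q : Fin m → ℝ) (j : Fin m) : phi q j / (1 - esq (phi q)) = q j := by
  rw [one_sub_esq_phi]
  have hS := Sf_pos q
  have hP : (0:ℝ) < 1 + Sf q := by linarith
  unfold phi
  field_simp

lemma hf_pos (q : Fin m → ℝ) : 0 < hf q := by
  have := Sf_pos q; unfold hf; positivity

lemma one_le_hf (q : Fin m → ℝ) : 1 ≤ hf q := by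
  have h := Sf_pos q
  rw [hf, le_div_iff₀ (by linarith : (0:ℝ) < 4 * Sf q)]
  nlinarith [sq_nonneg (1 - Sf q)]

lemma Sf_le_four_hf (q : Fin m → ℝ) : Sf q ≤ 4 * hf q := by
  have h := Sf_pos q
  rw [hf, ← mul_div_assoc, le_div_iff₀ (by linarith : (0:ℝ) < 4 * Sf q)]
  nlinarith

lemma one_sub_sq_esq_phi (q : Fin m → ℝ) : 1 - (esq (phi q)) ^ 2 = (hf q)⁻¹ := by
  have h := Sf_pos q
  have hP : (0:ℝ) < 1 + Sf q := by linarith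
  have e1 := one_sub_esq_phi q
  have e2 := one_add_esq_phi q
  have : 1 - (esq (phi q)) ^ 2 = (1 - esq (phi q)) * (1 + esq (phi q)) := by ring
  rw [this, e1, e2, hf]
  field_simp
  ring

lemma continuous_esq : Continuous (esq : (Fin m → ℝ) → ℝ) := by
  unfold esq; fun_prop

lemma continuous_Sf : Continuous (Sf : (Fin m → ℝ) → ℝ) := by
  unfold Sf esq; fun_prop

lemma continuous_hf : Continuous (hf : (Fin m → ℝ) → ℝ) := by
  unfold hf Sf esq
  apply Continuous.div (by fun_prop) (by fun_prop)
  intro x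
  have := Sf_pos (m := m) x
  unfold Sf esq at this
  positivity

end Stmt14Aux
section Fprops
open Stmt14Aux
variable {m n : ℕ} (I : Finset (Fin m)) (AV : Matrix (Fin m) (Fin m) ℝ)
    (π : Fin m → Matrix (Fin n) (Fin n) ℝ) (AC : Matrix (Fin m) (Fin n) ℝ)
    (w : Fin n → ℝ)

lemma contDiff_F : ContDiff ℝ 1 (fun q : Fin m → ℝ => fRic I AV π AC q w) := by
  rw [contDiff_pi]
  intro i
  unfold fRic
  apply ContDiff.add
  apply ContDiff.add
  · have h1 : ContDiff ℝ 1 (fun q : Fin m → ℝ => q i) := by fun_prop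
    exact (contDiff_const.mul (h1.pow 2)).mul contDiff_const
  · apply ContDiff.sum
    intro k _
    have h1 : ContDiff ℝ 1 (fun q : Fin m → ℝ => q k) := by fun_prop
    exact contDiff_const.mul h1
  · exact contDiff_const

lemma F_growth : ∃ C : ℝ, 0 < C ∧ ∀ (q : Fin m → ℝ) (i : Fin m),
    |fRic I AV π AC q w i| ≤ C * Sf q ^ 2 := by
  classical
  refine ⟨1 + (∑ i, ∑ k, |AV i k|) + ∑ i, |gfun π AC w i|, by positivity, fun q i => ?_⟩
  have hS1 := one_le_Sf q
  have hSsq := Sf_sq q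
  have hesq := esq_nonneg q
  have hSS : Sf q ≤ Sf q ^ 2 := by nlinarith
  have ha : |(1 / 2 : ℝ) * (q i) ^ 2 * (if i ∈ I then 1 else 0)| ≤ Sf q ^ 2 := by
    have h1 : q i ^ 2 ≤ esq q := sq_le_esq q i
    have h2 : |(if i ∈ I then (1:ℝ) else 0)| ≤ 1 := by split <;> simp
    rw [abs_mul, abs_mul]
    have : |(1/2 : ℝ)| * |q i ^ 2| ≤ esq q := by
      rw [abs_of_nonneg (by norm_num : (0:ℝ) ≤ 1/2), abs_of_nonneg (sq_nonneg _)]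
      nlinarith
    nlinarith [abs_nonneg ((1/2 : ℝ) * q i ^ 2), abs_mul (1/2 : ℝ) ((q i)^2)]
  have hb : |∑ k ∈ Finset.univ.filter (fun k => k ≤ i), AV i k * q k|
      ≤ (∑ i', ∑ k, |AV i' k|) * Sf q ^ 2 := by
    calc |∑ k ∈ Finset.univ.filter (fun k => k ≤ i), AV i k * q k|
        ≤ ∑ k ∈ Finset.univ.filter (fun k => k ≤ i), |AV i k * q k| :=
          Finset.abs_sum_le_sum_abs _ _
      _ ≤ ∑ k ∈ Finset.univ.filter (fun k => k ≤ i), |AV i k| * (Sf q / 2) := by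
          refine Finset.sum_le_sum fun k _ => ?_
          rw [abs_mul]
          exact mul_le_mul_of_nonneg_left (abs_le_Sf q k) (abs_nonneg _)
      _ = (∑ k ∈ Finset.univ.filter (fun k => k ≤ i), |AV i k|) * (Sf q / 2) :=
          (Finset.sum_mul _ _ _).symm
      _ ≤ (∑ k, |AV i k|) * (Sf q / 2) := by
          apply mul_le_mul_of_nonneg_right
          · exact Finset.sum_le_sum_of_subset_of_nonneg (Finset.filter_subset _ _)
              (fun _ _ _ => abs_nonneg _)
          · linarith
      _ ≤ (∑ i', ∑ k, |AV i' k|) * (Sf q / 2) := by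
          apply mul_le_mul_of_nonneg_right
          · exact Finset.single_le_sum (f := fun i' => ∑ k, |AV i' k|)
              (fun i' _ => Finset.sum_nonneg fun k _ => abs_nonneg _) (Finset.mem_univ i)
          · linarith
      _ ≤ (∑ i', ∑ k, |AV i' k|) * Sf q ^ 2 := by
          apply mul_le_mul_of_nonneg_left (by nlinarith)
          exact Finset.sum_nonneg fun i' _ => Finset.sum_nonneg fun k _ => abs_nonneg _
  have hc : |gfun π AC w i| ≤ (∑ i', |gfun π AC w i'|) * Sf q ^ 2 := by
    have h1 : |gfun π AC w i| ≤ ∑ i', |gfun π AC w i'| :=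
      Finset.single_le_sum (f := fun i' => |gfun π AC w i'|) (fun i' _ => abs_nonneg _)
        (Finset.mem_univ i)
    have h2 : (∑ i', |gfun π AC w i'|) ≤ (∑ i', |gfun π AC w i'|) * Sf q ^ 2 := by
      nlinarith [Finset.sum_nonneg (fun i' (_ : i' ∈ Finset.univ) => abs_nonneg (gfun π AC w i'))]
    linarith
  unfold fRic
  calc |(1 / 2 : ℝ) * (q i) ^ 2 * (if i ∈ I then 1 else 0)
        + (∑ k ∈ Finset.univ.filter (fun k => k ≤ i), AV i k * q k) + gfun π AC w i|
      ≤ |(1 / 2 : ℝ) * (q i) ^ 2 * (if i ∈ I then 1 else 0)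
        + (∑ k ∈ Finset.univ.filter (fun k => k ≤ i), AV i k * q k)| + |gfun π AC w i| :=
        abs_add_le _ _
    _ ≤ |(1 / 2 : ℝ) * (q i) ^ 2 * (if i ∈ I then 1 else 0)|
        + |∑ k ∈ Finset.univ.filter (fun k => k ≤ i), AV i k * q k| + |gfun π AC w i| := by
        linarith [abs_add_le ((1 / 2 : ℝ) * (q i) ^ 2 * (if i ∈ I then 1 else 0))
          (∑ k ∈ Finset.univ.filter (fun k => k ≤ i), AV i k * q k)]
    _ ≤ (1 + (∑ i', ∑ k, |AV i' k|) + ∑ i', |gfun π AC w i'|) * Sf q ^ 2 := by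
        rw [add_mul, add_mul, one_mul]
        linarith
  done

end Fprops

section Extension

open Set Metric

/-- A maximal solution with finite lifetime cannot remain bounded. -/
lemma no_bounded_max_sol {d : ℕ} (F : (Fin d → ℝ) → (Fin d → ℝ)) (hF : ContDiff ℝ 1 F)
    (y : ℝ → Fin d → ℝ) (T K : ℝ) (hT0 : 0 < T)
    (hy : IsMaxSol F y (ENNReal.ofReal T))
    (hbd : ∀ t, 0 ≤ t → t < T → ‖y t‖ ≤ K) : False := by
  classical
  have hK0 : 0 ≤ K := le_trans (norm_nonneg _) (hbd 0 le_rfl hT0)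
  -- derivative facts for y
  have hyd : ∀ t, 0 ≤ t → t < T → HasDerivAt y (F (y t)) t := by
    intro t ht htT
    exact hy.2.1 t ht (by rwa [ENNReal.ofReal_lt_ofReal_iff hT0])
  -- Lipschitz constant on a big ball
  obtain ⟨Lr, hLr⟩ := (isCompact_closedBall (0 : Fin d → ℝ) (K + 2)).exists_bound_of_continuousOn
    (hF.continuous_fderiv one_ne_zero).continuousOn
  set L : NNReal := Lr.toNNReal with hL
  have lip : LipschitzOnWith L F (closedBall (0 : Fin d → ℝ) (K + 2)) := by
    apply (convex_closedBall _ _).lipschitzOnWith_of_nnnorm_hasFDerivWithin_le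
      (f' := fun x => fderiv ℝ F x)
      (fun x _ => ((hF.differentiable one_ne_zero) x).hasFDerivAt.hasFDerivWithinAt)
    intro x hx
    rw [← NNReal.coe_le_coe, coe_nnnorm]
    exact (hLr x hx).trans (Real.le_coe_toNNReal Lr)
  -- bound on the vector field on a smaller ball
  obtain ⟨C₀, hC₀⟩ := (isCompact_closedBall (0 : Fin d → ℝ) (K + 1)).exists_bound_of_continuousOn
    hF.continuous.continuousOn
  set Cb : ℝ := max C₀ 1 with hCb
  have hCb1 : (1:ℝ) ≤ Cb := le_max_right _ _
  have hCb0 : (0:ℝ) < Cb := lt_of_lt_of_le one_pos hCb1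
  have hCbd : ∀ x ∈ closedBall (0 : Fin d → ℝ) (K + 1), ‖F x‖ ≤ Cb :=
    fun x hx => (hC₀ x hx).trans (le_max_left _ _)
  set ε : ℝ := 1 / Cb with hε
  have hε0 : 0 < ε := by positivity
  set t₀ : ℝ := max (T - ε / 2) (T / 2) with ht₀def
  have ht₀pos : 0 < t₀ := lt_of_lt_of_le (by linarith) (le_max_right _ _)
  have ht₀T : t₀ < T := max_lt (by linarith) (by linarith)
  have ht₀ε : T < t₀ + ε := by
    have : T - ε / 2 ≤ t₀ := le_max_left _ _
    linarith
  set x₀ : Fin d → ℝ := y t₀ with hx₀def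
  have hx₀K : ‖x₀‖ ≤ K := hbd t₀ ht₀pos.le ht₀T
  -- Picard–Lindelöf data
  have hsub1 : closedBall x₀ 1 ⊆ closedBall (0 : Fin d → ℝ) (K + 1) := by
    apply closedBall_subset_closedBall'
    rw [dist_zero_right]
    linarith
  have hsub2 : closedBall x₀ 1 ⊆ closedBall (0 : Fin d → ℝ) (K + 2) :=
    hsub1.trans (closedBall_subset_closedBall (by linarith))
  have hpl : IsPicardLindelof (fun _ : ℝ => F) (tmin := t₀ - ε) (tmax := t₀ + ε)
      ⟨t₀, by constructor <;> linarith⟩ x₀ 1 0 Cb.toNNReal L :=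
    IsPicardLindelof.of_time_independent
      (fun x hx => (hCbd x (hsub1 (by simpa using hx))).trans (Real.le_coe_toNNReal Cb))
      (lip.mono (by simpa using hsub2))
      (by
        rw [Real.coe_toNNReal _ hCb0.le]
        simp only [add_sub_cancel_left, sub_sub_cancel, max_self, NNReal.coe_one,
          NNReal.coe_zero, sub_zero]
        rw [hε, mul_one_div, div_self (ne_of_gt hCb0)])
  obtain ⟨α, hα0', hαd⟩ := hpl.exists_eq_forall_mem_Icc_hasDerivWithinAt₀
  have hα0 : α t₀ = x₀ := hα0'
  have hαd' : ∀ t ∈ Ioo (t₀ - ε) (t₀ + ε), HasDerivAt α (F (α t)) t := fun t ht =>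
    (hαd t (Ioo_subset_Icc_self ht)).hasDerivAt (Icc_mem_nhds ht.1 ht.2)
  -- y = α on [t₀, T)
  have hEq : ∀ t, t₀ ≤ t → t < T → y t = α t := by
    by_contra hne
    push_neg at hne
    obtain ⟨a₀, ha₀1, ha₀2, ha₀3⟩ := hne
    set A : Set ℝ := {t | t₀ ≤ t ∧ t < T ∧ y t ≠ α t} with hA
    have hAne : A.Nonempty := ⟨a₀, ha₀1, ha₀2, ha₀3⟩
    have hAbdd : BddBelow A := ⟨t₀, fun a ha => ha.1⟩
    set c : ℝ := sInf A with hc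
    have hct₀ : t₀ ≤ c := le_csInf hAne fun a ha => ha.1
    have hcT : c < T := lt_of_le_of_lt (csInf_le hAbdd ⟨ha₀1, ha₀2, ha₀3⟩) ha₀2
    have hcIoo : c ∈ Ioo (t₀ - ε) (t₀ + ε) := ⟨by linarith, by linarith⟩
    have hyc : ContinuousAt y c := (hyd c (by linarith) hcT).continuousAt
    have hαc : ContinuousAt α c := (hαd' c hcIoo).continuousAt
    -- y c = α c
    have hycαc : y c = α c := by
      rcases eq_or_lt_of_le hct₀ with h | h
      · rw [← h, hα0]
      · have heqon : ∀ u ∈ Ioo t₀ c, y u = α u := by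
          intro u hu
          by_contra hne'
          exact absurd (csInf_le hAbdd ⟨hu.1.le, by linarith [hu.2], hne'⟩) (by linarith [hu.2])
        have h1 : Filter.Tendsto y (nhdsWithin c (Ioo t₀ c)) (nhds (y c)) :=
          hyc.continuousWithinAt.tendsto
        have h2 : Filter.Tendsto α (nhdsWithin c (Ioo t₀ c)) (nhds (α c)) :=
          hαc.continuousWithinAt.tendsto
        have h3 : Filter.Tendsto y (nhdsWithin c (Ioo t₀ c)) (nhds (α c)) :=
          h2.congr' (Filter.eventuallyEq_of_mem self_mem_nhdsWithin
            (fun u hu => (heqon u hu).symm))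
        haveI : Filter.NeBot (nhdsWithin c (Ioo t₀ c)) := right_nhdsWithin_Ioo_neBot h
        exact tendsto_nhds_unique h1 h3
    -- local uniqueness around c
    have huniq : y =ᶠ[nhds c] α := by
      apply ODE_solution_unique_of_eventually
        (v := fun _ : ℝ => F) (s := fun _ => closedBall (0 : Fin d → ℝ) (K + 2))
        (Filter.Eventually.of_forall fun _ => lip)
      · have hev : ∀ᶠ t in nhds c, t ∈ Ioo (0:ℝ) T :=
          (isOpen_Ioo.eventually_mem (⟨by linarith, hcT⟩ : c ∈ Ioo (0:ℝ) T))
        filter_upwards [hev] with t ht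
        refine ⟨hyd t ht.1.le ht.2, ?_⟩
        rw [mem_closedBall, dist_zero_right]
        exact (hbd t ht.1.le ht.2).trans (by linarith)
      · have hev1 : ∀ᶠ t in nhds c, t ∈ Ioo (t₀ - ε) (t₀ + ε) :=
          isOpen_Ioo.eventually_mem hcIoo
        have hev2 : ∀ᶠ t in nhds c, α t ∈ ball (α c) 1 :=
          hαc (ball_mem_nhds (α c) one_pos)
        filter_upwards [hev1, hev2] with t ht hb
        refine ⟨hαd' t ht, ?_⟩
        rw [mem_closedBall, dist_zero_right]
        have h1 : ‖α t - α c‖ < 1 := by rwa [mem_ball, dist_eq_norm] at hb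
        have h2 : ‖α c‖ ≤ K := by rw [← hycαc]; exact hbd c (by linarith) hcT
        calc ‖α t‖ = ‖α t - α c + α c‖ := by ring_nf
          _ ≤ ‖α t - α c‖ + ‖α c‖ := norm_add_le _ _
          _ ≤ K + 2 := by linarith
      · exact hycαc
    obtain ⟨δ, hδ0, hδ⟩ := Metric.eventually_nhds_iff.mp huniq
    obtain ⟨a, haA, halt⟩ := (csInf_lt_iff hAbdd hAne).mp (by linarith : sInf A < c + δ)
    have hca : c ≤ a := csInf_le hAbdd haA
    have : y a = α a := hδ (by rw [Real.dist_eq, abs_of_nonneg (by linarith)]; linarith)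
    exact haA.2.2 this
  -- glue and contradict maximality
  set t₁ : ℝ := (t₀ + T) / 2 with ht₁def
  have ht₁1 : t₀ < t₁ := by rw [ht₁def]; linarith
  have ht₁2 : t₁ < T := by rw [ht₁def]; linarith
  set z : ℝ → Fin d → ℝ := fun t => if t < t₁ then y t else α t with hz
  have hz0 : z 0 = y 0 := by simp only [hz]; exact if_pos (by linarith : (0:ℝ) < t₁)
  have hsol : SolOn F z (ENNReal.ofReal (t₀ + ε)) := by
    intro t ht hlt
    rw [ENNReal.ofReal_lt_ofReal_iff (by linarith)] at hlt
    rcases lt_trichotomy t t₁ with h | h | h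
    · have hev : ∀ᶠ u in nhds t, z u = y u := by
        filter_upwards [isOpen_Iio.eventually_mem (h : t ∈ Iio t₁)] with u hu
        simp only [hz]; exact if_pos hu
      have hzt : z t = y t := by simp only [hz]; exact if_pos h
      rw [hzt]
      exact (hyd t ht (by linarith)).congr_of_eventuallyEq hev
    · subst h
      have hev : ∀ᶠ u in nhds t₁, z u = α u := by
        filter_upwards [isOpen_Ioo.eventually_mem (⟨ht₁1, ht₁2⟩ : t₁ ∈ Ioo t₀ T)] with u hu
        simp only [hz]
        by_cases h' : u < t₁
        · rw [if_pos h', hEq u hu.1.le hu.2]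
        · rw [if_neg h']
      have hzt : z t₁ = α t₁ := by simp only [hz]; exact if_neg (lt_irrefl t₁)
      rw [hzt]
      exact (hαd' t₁ ⟨by linarith, by linarith⟩).congr_of_eventuallyEq hev
    · have hev : ∀ᶠ u in nhds t, z u = α u := by
        filter_upwards [isOpen_Ioi.eventually_mem (h : t ∈ Ioi t₁)] with u hu
        simp only [hz]; exact if_neg (not_lt.mpr (le_of_lt hu))
      have hzt : z t = α t := by simp only [hz]; exact if_neg (not_lt.mpr h.le)
      rw [hzt]
      exact (hαd' t ⟨by linarith, hlt⟩).congr_of_eventuallyEq hev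
  exact hy.2.2 z (ENNReal.ofReal (t₀ + ε))
    (by rw [ENNReal.ofReal_lt_ofReal_iff (by linarith)]; exact ht₀ε) hsol hz0

end Extension

section ChainRule
open Stmt14Aux Set

variable {m n : ℕ} (I : Finset (Fin m)) (AV : Matrix (Fin m) (Fin m) ℝ)
    (π : Fin m → Matrix (Fin n) (Fin n) ℝ) (AC : Matrix (Fin m) (Fin n) ℝ)
    (w : Fin n → ℝ)

lemma ftilde_phi (q : Fin m → ℝ) (i : Fin m) :
    ftilde I AV π AC w (phi q) i
      = (2 / (1 + Sf q)) ^ 2 * fRic I AV π AC q w i := by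
  have h : ftilde I AV π AC w (phi q) i
      = (1 - esq (phi q)) ^ 2 * fRic I AV π AC
        (fun j => phi q j / (1 - esq (phi q))) w i := rfl
  rw [h, show (fun j => phi q j / (1 - esq (phi q))) = q from funext (phi_div q),
    one_sub_esq_phi]

/-- The chain rule for the compactification map, coordinatewise. -/
lemma hasDerivWithinAt_phi_comp {c : ℝ → Fin m → ℝ} {s : Set ℝ} {t : ℝ}
    (hci : ∀ i, HasDerivWithinAt (fun u => c u i)
      ((hf (c t))⁻¹ * fRic I AV π AC (c t) w i) s t) (i : Fin m) :
    HasDerivWithinAt (fun u => phi (c u) i)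
      ((1 + esq (phi (c t))) * ftilde I AV π AC w (phi (c t)) i
        - 2 * (∑ j, phi (c t) j * ftilde I AV π AC w (phi (c t)) j) * phi (c t) i) s t := by
  classical
  set q : Fin m → ℝ := c t with hq
  set S : ℝ := Sf q with hSdef
  have hS0 : 0 < S := Sf_pos q
  have hP0 : (0:ℝ) < 1 + S := by linarith
  have hSsq : S ^ 2 = 1 + 4 * esq q := Sf_sq q
  have hesq : 0 ≤ esq q := esq_nonneg q
  have harg : (0:ℝ) < 1 + 4 * esq q := by linarith
  set k : ℝ := (hf q)⁻¹ with hkdef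
  have hk : k = 4 * S / (1 + S) ^ 2 := by
    rw [hkdef, hf, inv_div]
  set Fq : Fin m → ℝ := fun i => fRic I AV π AC q w i with hFq
  set Q : ℝ := ∑ j, q j * Fq j with hQ
  -- derivative of esq ∘ c
  have hE : HasDerivWithinAt (fun u => esq (c u)) (2 * k * Q) s t := by
    have h1 : HasDerivWithinAt (fun u => ∑ j, c u j ^ 2) (∑ j, 2 * q j * (k * Fq j)) s t := by
      apply HasDerivWithinAt.fun_sum
      intro j _
      have := (hci j).fun_pow 2
      refine this.congr_deriv ?_
      push_cast
      ring
    have h2 : (∑ j, 2 * q j * (k * Fq j)) = 2 * k * Q := by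
      rw [hQ, Finset.mul_sum]
      exact Finset.sum_congr rfl fun j _ => by ring
    rw [← h2]
    exact h1
  -- derivative of Sf ∘ c
  have hSder : HasDerivWithinAt (fun u => Sf (c u)) (4 * (2 * k * Q) / (2 * S)) s t := by
    have h1 : HasDerivWithinAt (fun u => 1 + 4 * esq (c u)) (4 * (2 * k * Q)) s t :=
      (hE.const_mul 4).const_add 1
    have h2 := h1.sqrt (by rw [← hq]; exact ne_of_gt harg)
    exact h2
  -- derivative of the i-th coordinate of phi ∘ c
  have hnum : HasDerivWithinAt (fun u => 2 * c u i) (2 * (k * Fq i)) s t :=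
    (hci i).const_mul 2
  have hden : HasDerivWithinAt (fun u => 1 + Sf (c u)) (4 * (2 * k * Q) / (2 * S)) s t :=
    hSder.const_add 1
  have hdiv : HasDerivWithinAt (fun u => 2 * c u i / (1 + Sf (c u)))
      ((2 * (k * Fq i) * (1 + S) - 2 * q i * (4 * (2 * k * Q) / (2 * S))) / (1 + S) ^ 2) s t :=
    hnum.div hden (by rw [← hq, ← hSdef]; exact ne_of_gt hP0)
  have hphii : (fun u => phi (c u) i) = fun u => 2 * c u i / (1 + Sf (c u)) := rfl
  rw [hphii]
  convert hdiv using 1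
  -- now the algebraic identity
  have hsum : (∑ j, phi q j * ftilde I AV π AC w (phi q) j) = 8 / (1 + S) ^ 3 * Q := by
    rw [hQ, Finset.mul_sum]
    refine Finset.sum_congr rfl fun j _ => ?_
    rw [ftilde_phi]
    show 2 * q j / (1 + Sf q) * ((2 / (1 + Sf q)) ^ 2 * Fq j) = _
    rw [← hSdef]
    field_simp
    ring
  rw [ftilde_phi, hsum, one_add_esq_phi, ← hSdef, hk]
  have hphiqi : phi q i = 2 * q i / (1 + S) := rfl
  have hFqi : fRic I AV π AC q w i = Fq i := rfl
  rw [hphiqi, hFqi]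
  field_simp
  ring

end ChainRule

section MainProof
open Stmt14Aux Set

set_option maxHeartbeats 4000000 in
theorem stmt14 (m n : ℕ) (hm : 1 ≤ m)
    (I : Finset (Fin m)) (hI : I.Nonempty)
    (AV : Matrix (Fin m) (Fin m) ℝ)
    (hAVtri : ∀ i k : Fin m, i < k → AV i k = 0)
    (hAVdiag : ∀ i : Fin m, AV i i < 0)
    (hAVoff : ∀ i k : Fin m, i ≠ k → 0 ≤ AV i k)
    (π : Fin m → Matrix (Fin n) (Fin n) ℝ)
    (hπ : ∀ i, (π i).PosSemidef)
    (AC : Matrix (Fin m) (Fin n) ℝ) (AD : Matrix (Fin n) (Fin n) ℝ)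
    (v : Fin m → ℝ) (w : Fin n → ℝ) (hw : AD.mulVec w = 0)
    (y : ℝ → Fin m → ℝ) (Tstar : ℝ≥0∞)
    (hy : IsMaxSol (fun q => fRic I AV π AC q w) y Tstar) (hy0 : y 0 = v) :
    ∃ x : ℝ → Fin m → ℝ,
      x 0 = (fun i => 2 * v i / (1 + Real.sqrt (1 + 4 * ∑ j, (v j) ^ 2)))
      ∧ (∀ s : ℝ, 0 ≤ s → HasDerivAt x
          (fun i => (1 + ∑ j, (x s j) ^ 2) * ftilde I AV π AC w (x s) i
            - 2 * (∑ j, x s j * ftilde I AV π AC w (x s) j) * x s i) s)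
      ∧ (∀ s : ℝ, 0 ≤ s → ∑ j, (x s j) ^ 2 < 1)
      ∧ Tstar = ∫⁻ s in Set.Ioi (0 : ℝ),
          ENNReal.ofReal (1 - (∑ j, (x s j) ^ 2) ^ 2) := by
  classical
  set F : (Fin m → ℝ) → (Fin m → ℝ) := fun q => fRic I AV π AC q w with hFdef
  have hT0 : 0 < Tstar := hy.1
  have hyd : ∀ t : ℝ, 0 ≤ t → ENNReal.ofReal t < Tstar → HasDerivAt y (F (y t)) t := hy.2.1
  set Ω : Set ℝ := {t | ENNReal.ofReal t < Tstar} with hΩdef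
  have hΩ0 : (0:ℝ) ∈ Ω := by simp only [hΩdef, mem_setOf_eq, ENNReal.ofReal_zero]; exact hT0
  have hΩdown : ∀ {a b : ℝ}, a ≤ b → b ∈ Ω → a ∈ Ω := fun hab hb =>
    lt_of_le_of_lt (ENNReal.ofReal_le_ofReal hab) hb
  have hΩopen : IsOpen Ω := by
    rw [isOpen_iff_mem_nhds]
    intro t ht
    have ht' : ENNReal.ofReal t < Tstar := ht
    obtain ⟨c, hc1, hc2⟩ := exists_between ht'
    have hcne : c ≠ ⊤ := ne_top_of_lt hc2
    have hr : ENNReal.ofReal c.toReal = c := ENNReal.ofReal_toReal hcne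
    have htr : t < c.toReal := by
      rcases le_or_gt t 0 with h | h
      · have : (0:ℝ) < c.toReal := by
          rw [ENNReal.toReal_pos_iff]
          exact ⟨lt_of_le_of_lt zero_le hc1, lt_top_iff_ne_top.mpr hcne⟩
        linarith
      · by_contra hcon
        push_neg at hcon
        have h5 : ENNReal.ofReal c.toReal ≤ ENNReal.ofReal t := ENNReal.ofReal_le_ofReal hcon
        rw [hr] at h5
        exact absurd (lt_of_lt_of_le hc1 h5) (lt_irrefl _)
    refine Filter.mem_of_superset (Iio_mem_nhds htr) ?_
    intro u hu
    have h6 : ENNReal.ofReal u ≤ ENNReal.ofReal c.toReal := ENNReal.ofReal_le_ofReal (le_of_lt hu)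
    rw [hr] at h6
    exact lt_of_le_of_lt h6 hc2
  -- the stopped trajectory
  set yt : ℝ → Fin m → ℝ := fun t => y (max t 0) with hytdef
  have hytneg : ∀ t ≤ (0:ℝ), yt t = v := by
    intro t ht
    simp only [hytdef, max_eq_right ht, hy0]
  have hytnn : ∀ t, 0 ≤ t → yt t = y t := by
    intro t ht
    simp only [hytdef, max_eq_left ht]
  have hmaxΩ : ∀ t ∈ Ω, max t 0 ∈ Ω := by
    intro t ht
    rcases le_total t 0 with h | h
    · rw [max_eq_right h]; exact hΩ0
    · rw [max_eq_left h]; exact ht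
  have hytc : ∀ t ∈ Ω, ContinuousAt yt t := by
    intro t ht
    have h1 : ContinuousAt y (max t 0) :=
      (hyd _ (le_max_right t 0) (hmaxΩ t ht)).continuousAt
    have h2 : ContinuousAt (fun u : ℝ => max u 0) t :=
      (continuous_id.max continuous_const).continuousAt
    exact ContinuousAt.comp h1 h2
  have hytd : ∀ t ∈ Ω, 0 < t → HasDerivAt yt (F (yt t)) t := by
    intro t ht htpos
    have hev : ∀ᶠ u in nhds t, y u = yt u := by
      filter_upwards [isOpen_Ioi.eventually_mem (htpos : t ∈ Ioi 0)] with u hu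
      rw [hytnn u (le_of_lt hu)]
    have := (hyd t (le_of_lt htpos) ht)
    rw [show y t = yt t from (hytnn t (le_of_lt htpos)).symm] at this
    exact this.congr_of_eventuallyEq (hev.mono fun u hu => hu.symm)
  -- speed function
  set ht : ℝ → ℝ := fun t => hf (yt t) with hhtdef
  have hht1 : ∀ t, 1 ≤ ht t := fun t => one_le_hf _
  have hhtpos : ∀ t, 0 < ht t := fun t => lt_of_lt_of_le one_pos (hht1 t)
  have hhtc : ∀ t ∈ Ω, ContinuousAt ht t := fun t htt =>
    (continuous_hf.continuousAt).comp (hytc t htt)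
  have hhtcΩ : ContinuousOn ht Ω := fun t htt => (hhtc t htt).continuousWithinAt
  -- time rescaling
  set σ : ℝ → ℝ := fun t => ∫ u in (0:ℝ)..t, ht u with hσdef
  have huIccΩ : ∀ t ∈ Ω, uIcc (0:ℝ) t ⊆ Ω := by
    intro t htt u hu
    rcases le_total (0:ℝ) t with h | h
    · rw [uIcc_of_le h] at hu; exact hΩdown hu.2 htt
    · rw [uIcc_of_ge h] at hu; exact hΩdown hu.2 hΩ0
  have hInt : ∀ t ∈ Ω, IntervalIntegrable ht MeasureTheory.volume 0 t := by
    intro t htt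
    exact (hhtcΩ.mono (huIccΩ t htt)).intervalIntegrable
  have hσd : ∀ t ∈ Ω, HasDerivAt σ (ht t) t := by
    intro t htt
    exact intervalIntegral.integral_hasDerivAt_right (hInt t htt)
      (hhtcΩ.stronglyMeasurableAtFilter hΩopen t htt) (hhtc t htt)
  have hσ0 : σ 0 = 0 := intervalIntegral.integral_same
  have hΩconv : Convex ℝ Ω :=
    Set.OrdConnected.convex ⟨fun a _ b hb u hu => hΩdown hu.2 hb⟩
  have hσcont : ContinuousOn σ Ω := fun t htt => ((hσd t htt).continuousAt).continuousWithinAt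
  have hσmono : StrictMonoOn σ Ω := by
    apply strictMonoOn_of_deriv_pos hΩconv hσcont
    intro t htt
    rw [hΩopen.interior_eq] at htt
    rw [(hσd t htt).deriv]
    exact hhtpos t
  have hσneg : ∀ s : ℝ, s ≤ 0 → σ s = hf v * s := by
    intro s hs
    have heq : EqOn ht (fun _ => hf v) (uIcc (0:ℝ) s) := by
      intro u hu
      rw [uIcc_of_ge hs] at hu
      simp only [hhtdef]
      rw [hytneg u hu.2]
    show (∫ u in (0:ℝ)..s, ht u) = hf v * s
    rw [intervalIntegral.integral_congr heq, intervalIntegral.integral_const, smul_eq_mul]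
    ring
  have hσge : ∀ t ∈ Ω, 0 ≤ t → t ≤ σ t := by
    intro t htt ht0
    have h1 : ∫ u in (0:ℝ)..t, (1:ℝ) ≤ ∫ u in (0:ℝ)..t, ht u := by
      apply intervalIntegral.integral_mono_on ht0 (by simp) (hInt t htt)
      intro u _
      exact hht1 u
    have h2 : (∫ u in (0:ℝ)..t, (1:ℝ)) = t := by
      rw [intervalIntegral.integral_const, smul_eq_mul, sub_zero, mul_one]
    rwa [h2] at h1
  -- σ is unbounded
  have hBIG : ∀ M : ℝ, ∃ t, t ∈ Ω ∧ 0 ≤ t ∧ M ≤ σ t := by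
    intro M
    by_contra hcon
    push_neg at hcon
    have hcon' : ∀ t, t ∈ Ω → 0 ≤ t → σ t < M := fun t h1 h2 => (hcon t h1 h2)
    have hM0 : 0 < M := by
      have := hcon' 0 hΩ0 le_rfl
      rwa [hσ0] at this
    have hTfin : Tstar ≤ ENNReal.ofReal M := by
      by_contra hT
      push_neg at hT
      obtain ⟨c, h1, h2⟩ := exists_between hT
      have hcne : c ≠ ⊤ := ne_top_of_lt h2
      set r : ℝ := c.toReal with hrdef
      have hrr : ENNReal.ofReal r = c := ENNReal.ofReal_toReal hcne
      have hrΩ : r ∈ Ω := by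
        show ENNReal.ofReal r < Tstar
        rw [hrr]
        exact h2
      have hrM : M < r := by
        rw [← hrr] at h1
        exact (ENNReal.ofReal_lt_ofReal_iff_of_nonneg (le_of_lt hM0)).mp h1
      have hr0 : 0 ≤ r := le_trans (le_of_lt hM0) (le_of_lt hrM)
      have hs1 := hcon' r hrΩ hr0
      have hs2 := hσge r hrΩ hr0
      linarith
    have hTne : Tstar ≠ ⊤ := ne_top_of_le_ne_top ENNReal.ofReal_ne_top hTfin
    set T : ℝ := Tstar.toReal with hTdef
    have hTeq : Tstar = ENNReal.ofReal T := (ENNReal.ofReal_toReal hTne).symm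
    have hTpos : 0 < T := ENNReal.toReal_pos (ne_of_gt hT0) hTne
    have hΩchar : ∀ t : ℝ, 0 ≤ t → t < T → t ∈ Ω := by
      intro t h1 h2
      show ENNReal.ofReal t < Tstar
      rw [hTeq]
      exact (ENNReal.ofReal_lt_ofReal_iff hTpos).mpr h2
    obtain ⟨C, hC0, hCb⟩ := F_growth I AV π AC w
    have hm' : (0:ℝ) < (m:ℝ) := by exact_mod_cast lt_of_lt_of_le zero_lt_one hm
    set c₀ : ℝ := 8 * m * C with hc₀def
    have hc₀pos : 0 < c₀ := by positivity
    set B : ℝ := Real.exp (Real.log (1 + Sf v) + c₀ * M) with hBdef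
    have hB0 : 0 < B := Real.exp_pos _
    have hbound : ∀ t : ℝ, 0 ≤ t → t < T → Sf (y t) ≤ B := by
      intro t htt htT
      have hSfv : 0 < 1 + Sf v := by linarith [Sf_pos v]
      rcases eq_or_lt_of_le htt with hteq | htpos
      · -- t = 0
        rw [← hteq, hy0]
        have h1 : 1 + Sf v = Real.exp (Real.log (1 + Sf v)) := (Real.exp_log hSfv).symm
        have h2 : Real.exp (Real.log (1 + Sf v)) ≤ B := by
          apply Real.exp_le_exp.mpr
          nlinarith
        linarith [Sf_pos v]
      · -- 0 < t
        have hmemΩ : ∀ u ∈ Icc (0:ℝ) t, u ∈ Ω := fun u hu =>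
          hΩchar u hu.1 (lt_of_le_of_lt hu.2 htT)
        have hGd : ∀ u, 0 ≤ u → u ∈ Ω → HasDerivAt
            (fun u' => Real.log (1 + Sf (y u')) - c₀ * σ u')
            (4 * (∑ j, 2 * y u j * F (y u) j) / (2 * Sf (y u)) / (1 + Sf (y u))
              - c₀ * ht u) u := by
          intro u hu1 hu2
          have hyd' : HasDerivAt y (F (y u)) u := hyd u hu1 hu2
          have hE : HasDerivAt (fun r => esq (y r)) (∑ j, 2 * y u j * F (y u) j) u := by
            have h1 : HasDerivAt (fun r => ∑ j, y r j ^ 2)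
                (∑ j, 2 * y u j * F (y u) j) u := by
              apply HasDerivAt.fun_sum
              intro j _
              have hyj : HasDerivAt (fun r => y r j) (F (y u) j) u := hasDerivAt_pi.mp hyd' j
              have h2 := hyj.fun_pow 2
              refine h2.congr_deriv ?_
              push_cast
              ring
            exact h1
          have harg : HasDerivAt (fun r => 1 + 4 * esq (y r))
              (4 * (∑ j, 2 * y u j * F (y u) j)) u := (hE.const_mul 4).const_add 1
          have hSy : HasDerivAt (fun r => Sf (y r))
              (4 * (∑ j, 2 * y u j * F (y u) j) / (2 * Real.sqrt (1 + 4 * esq (y u)))) u := by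
            have h3 := harg.sqrt (by nlinarith [esq_nonneg (y u)] : 1 + 4 * esq (y u) ≠ 0)
            exact h3
          have hSy' : HasDerivAt (fun r => Sf (y r))
              (4 * (∑ j, 2 * y u j * F (y u) j) / (2 * Sf (y u))) u := hSy
          have hlog : HasDerivAt (fun r => Real.log (1 + Sf (y r)))
              (4 * (∑ j, 2 * y u j * F (y u) j) / (2 * Sf (y u)) / (1 + Sf (y u))) u := by
            have h4 := (hSy'.const_add 1).log
              (by linarith [Sf_pos (y u)] : 1 + Sf (y u) ≠ 0)
            exact h4
          exact hlog.sub ((hσd u hu2).const_mul c₀)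
        have hGfc : ContinuousOn (fun u' => Real.log (1 + Sf (y u')) - c₀ * σ u') (Icc 0 t) := by
          intro u hu
          have huΩ := hmemΩ u hu
          have hyc : ContinuousAt y u := (hyd u hu.1 huΩ).continuousAt
          have hS : ContinuousAt (fun r => 1 + Sf (y r)) u :=
            continuousAt_const.add (continuous_Sf.continuousAt.comp hyc)
          have h1 : ContinuousAt (fun r => Real.log (1 + Sf (y r))) u :=
            (Real.continuousAt_log (by linarith [Sf_pos (y u)])).comp hS
          exact ((h1.sub (continuousAt_const.mul (hσd u huΩ).continuousAt))).continuousWithinAt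
        have hanti : AntitoneOn (fun u' => Real.log (1 + Sf (y u')) - c₀ * σ u') (Icc 0 t) := by
          apply antitoneOn_of_deriv_nonpos (convex_Icc 0 t) hGfc
          · intro u hu
            rw [interior_Icc] at hu
            have huΩ : u ∈ Ω := hmemΩ u ⟨le_of_lt hu.1, le_of_lt hu.2⟩
            exact (hGd u (le_of_lt hu.1) huΩ).differentiableAt.differentiableWithinAt
          · intro u hu
            rw [interior_Icc] at hu
            have huΩ : u ∈ Ω := hmemΩ u ⟨le_of_lt hu.1, le_of_lt hu.2⟩
            rw [(hGd u (le_of_lt hu.1) huΩ).deriv]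
            -- show the derivative is nonpositive
            set S : ℝ := Sf (y u) with hSdef2
            have hS1 : 1 ≤ S := one_le_Sf (y u)
            have hS0 : 0 < S := by linarith
            set Q : ℝ := ∑ j, y u j * F (y u) j with hQdef2
            have hsum2 : (∑ j, 2 * y u j * F (y u) j) = 2 * Q := by
              rw [hQdef2, Finset.mul_sum]
              exact Finset.sum_congr rfl fun j _ => by ring
            rw [hsum2]
            have hQabs : Q ≤ (m:ℝ) * (C * S ^ 3 / 2) := by
              calc Q ≤ |Q| := le_abs_self Q
                _ ≤ ∑ j, |y u j * F (y u) j| := Finset.abs_sum_le_sum_abs _ _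
                _ ≤ ∑ _j : Fin m, S / 2 * (C * S ^ 2) := by
                    refine Finset.sum_le_sum fun j _ => ?_
                    rw [abs_mul]
                    apply mul_le_mul (abs_le_Sf (y u) j) (hCb (y u) j) (abs_nonneg _)
                    linarith
                _ = (m:ℝ) * (S / 2 * (C * S ^ 2)) := by
                    rw [Finset.sum_const, Finset.card_univ, Fintype.card_fin, nsmul_eq_mul]
                _ = (m:ℝ) * (C * S ^ 3 / 2) := by ring
            have hhfS : S ≤ 4 * ht u := by
              have h5 : ht u = hf (y u) := by
                show hf (yt u) = hf (y u)
                rw [hytnn u (le_of_lt hu.1)]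
              rw [h5]
              exact Sf_le_four_hf (y u)
            have hht1u : 1 ≤ ht u := hht1 u
            have hstep : 4 * (2 * Q) / (2 * S) / (1 + S) ≤ c₀ * ht u := by
              rw [div_le_iff₀ (by linarith : (0:ℝ) < 1 + S), div_le_iff₀ (by linarith : (0:ℝ) < 2 * S)]
              rw [hc₀def]
              have k1 : 4 * (m:ℝ) * C * S ^ 2 * S ≤ 4 * (m:ℝ) * C * S ^ 2 * (4 * ht u) :=
                mul_le_mul_of_nonneg_left hhfS (by positivity)
              have k2 : (0:ℝ) ≤ 16 * (m:ℝ) * C * (ht u) * S := by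
                have := hhtpos u
                positivity
              nlinarith [hQabs, k1, k2]
            linarith
        have hG1 : Real.log (1 + Sf (y t)) - c₀ * σ t
            ≤ Real.log (1 + Sf (y 0)) - c₀ * σ 0 :=
          hanti (⟨le_rfl, htt⟩ : (0:ℝ) ∈ Icc (0:ℝ) t) (⟨htt, le_rfl⟩ : t ∈ Icc (0:ℝ) t) htt
        have hσtM : σ t < M := hcon' t (hmemΩ t ⟨htt, le_rfl⟩) htt
        have hlogle : Real.log (1 + Sf (y t)) ≤ Real.log (1 + Sf v) + c₀ * M := by
          rw [hσ0, hy0] at hG1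
          nlinarith
        have hSyt : 0 < 1 + Sf (y t) := by linarith [Sf_pos (y t)]
        have h7 : 1 + Sf (y t) = Real.exp (Real.log (1 + Sf (y t))) := (Real.exp_log hSyt).symm
        have h8 : Real.exp (Real.log (1 + Sf (y t))) ≤ B := Real.exp_le_exp.mpr hlogle
        linarith
    have hnorm : ∀ t, 0 ≤ t → t < T → ‖y t‖ ≤ B := by
      intro t h1 h2
      rw [pi_norm_le_iff_of_nonneg (le_of_lt hB0)]
      intro i
      have h3 := abs_le_Sf (y t) i
      have h4 := hbound t h1 h2
      have h5 := Sf_pos (y t)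
      calc |y t i| ≤ Sf (y t) / 2 := h3
        _ ≤ B := by linarith
    exact no_bounded_max_sol F (contDiff_F I AV π AC w) y T B hTpos (hTeq ▸ hy) hnorm
  -- surjectivity data for the inverse
  have hσsurj : ∀ s : ℝ, ∃ t, t ∈ Ω ∧ σ t = s ∧ (0 ≤ s → 0 ≤ t) := by
    intro s
    rcases le_or_gt s 0 with hs | hs
    · have hdivnp : s / hf v ≤ 0 := div_nonpos_of_nonpos_of_nonneg hs (le_of_lt (hf_pos v))
      refine ⟨s / hf v, hΩdown hdivnp hΩ0, ?_, ?_⟩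
      · rw [hσneg _ hdivnp, mul_div_cancel₀]
        exact ne_of_gt (hf_pos v)
      · intro h
        have hs0 : s = 0 := le_antisymm hs h
        rw [hs0, zero_div]
    · obtain ⟨t₁, ht₁Ω, ht₁0, hM⟩ := hBIG s
      have hc : ContinuousOn σ (Icc 0 t₁) := hσcont.mono (fun u hu => hΩdown hu.2 ht₁Ω)
      have : s ∈ σ '' Icc 0 t₁ := by
        apply intermediate_value_Icc ht₁0 hc
        rw [hσ0]
        exact ⟨le_of_lt hs, hM⟩
      obtain ⟨t, htIcc, hts⟩ := this
      exact ⟨t, hΩdown htIcc.2 ht₁Ω, hts, fun _ => htIcc.1⟩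
  choose τ hτΩ hτσ hτ0 using hσsurj
  have hτmono : StrictMono τ := by
    intro a b hab
    by_contra hcon
    push_neg at hcon
    have := (hσmono.monotoneOn) (hτΩ b) (hτΩ a) hcon
    rw [hτσ a, hτσ b] at this
    exact absurd hab (not_lt.mpr this)
  have hτσid : ∀ t ∈ Ω, τ (σ t) = t := by
    intro t htt
    exact hσmono.injOn (hτΩ (σ t)) htt (hτσ (σ t))
  have hτzero : τ 0 = 0 := by
    have := hτσid 0 hΩ0
    rwa [hσ0] at this
  -- continuity of τ
  have hτcont : Continuous τ := by
    rw [continuous_iff_continuousAt]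
    intro s₀
    rw [Metric.continuousAt_iff]
    intro ε hε
    obtain ⟨r, hr0, hrsub⟩ := Metric.isOpen_iff.mp hΩopen (τ s₀) (hτΩ s₀)
    set ε' : ℝ := min (r / 2) (ε / 2) with hε'def
    have hε'0 : 0 < ε' := lt_min (by linarith) (by linarith)
    have hε'ε : ε' < ε := lt_of_le_of_lt (min_le_right _ _) (by linarith)
    have hmem : ∀ u : ℝ, |u - τ s₀| ≤ ε' → u ∈ Ω := by
      intro u hu
      apply hrsub
      rw [Metric.mem_ball, Real.dist_eq]
      exact lt_of_le_of_lt (hu.trans (min_le_left _ _)) (by linarith)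
    have hup : τ s₀ + ε' ∈ Ω := hmem _ (by rw [add_sub_cancel_left, abs_of_pos hε'0])
    have hdn : τ s₀ - ε' ∈ Ω := hmem _ (by
      rw [sub_sub_cancel_left, abs_neg, abs_of_pos hε'0])
    set δ : ℝ := min (σ (τ s₀ + ε') - s₀) (s₀ - σ (τ s₀ - ε')) with hδdef
    have hδ1 : 0 < σ (τ s₀ + ε') - s₀ := by
      have := hσmono (hτΩ s₀) hup (by linarith)
      rw [hτσ s₀] at this
      linarith
    have hδ2 : 0 < s₀ - σ (τ s₀ - ε') := by
      have := hσmono hdn (hτΩ s₀) (by linarith)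
      rw [hτσ s₀] at this
      linarith
    refine ⟨δ, lt_min hδ1 hδ2, ?_⟩
    intro s hs
    rw [Real.dist_eq] at hs ⊢
    have h1 : τ s < τ s₀ + ε' := by
      by_contra hcon
      push_neg at hcon
      have := (hσmono.monotoneOn) hup (hτΩ s) hcon
      rw [hτσ s] at this
      have h2 : σ (τ s₀ + ε') - s₀ ≥ δ := min_le_left _ _
      have h3 : |s - s₀| < δ := hs
      rw [abs_lt] at h3
      linarith
    have h2 : τ s₀ - ε' < τ s := by
      by_contra hcon
      push_neg at hcon
      have := (hσmono.monotoneOn) (hτΩ s) hdn hcon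
      rw [hτσ s] at this
      have h2 : s₀ - σ (τ s₀ - ε') ≥ δ := min_le_right _ _
      have h3 : |s - s₀| < δ := hs
      rw [abs_lt] at h3
      linarith
    rw [abs_lt]
    constructor <;> linarith
  -- derivative of τ
  have hτd : ∀ s : ℝ, HasDerivAt τ (ht (τ s))⁻¹ s := by
    intro s
    exact HasDerivAt.of_local_left_inverse hτcont.continuousAt
      (hσd (τ s) (hτΩ s)) (ne_of_gt (hhtpos (τ s)))
      (Filter.Eventually.of_forall hτσ)
  -- the compactified vector field
  set Gv : (Fin m → ℝ) → (Fin m → ℝ) := fun p i =>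
    (1 + esq p) * ftilde I AV π AC w p i
      - 2 * (∑ j, p j * ftilde I AV π AC w p j) * p i with hGdef
  -- the compactified trajectory
  set x : ℝ → Fin m → ℝ :=
    fun s => if s < 0 then phi v + s • Gv (phi v) else phi (yt (τ s)) with hxdef
  have hxnn : ∀ s : ℝ, 0 ≤ s → x s = phi (yt (τ s)) := by
    intro s hs
    simp only [hxdef]
    rw [if_neg (not_lt.mpr hs)]
  have hx0 : x 0 = phi v := by
    rw [hxnn 0 le_rfl, hτzero, hytneg 0 le_rfl]
  -- coordinatewise derivative of yt ∘ τ for s > 0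
  have hcomp_pos : ∀ s : ℝ, 0 < s → ∀ i, HasDerivAt (fun u => yt (τ u) i)
      ((hf (yt (τ s)))⁻¹ * fRic I AV π AC (yt (τ s)) w i) s := by
    intro s hs i
    have hτspos : 0 < τ s := by
      rw [← hτzero]
      exact hτmono hs
    have h1 : HasDerivAt yt (F (yt (τ s))) (τ s) := hytd (τ s) (hτΩ s) hτspos
    have h2 : HasDerivAt (yt ∘ τ) ((ht (τ s))⁻¹ • F (yt (τ s))) s :=
      HasDerivAt.scomp s h1 (hτd s)
    have h3 := hasDerivAt_pi.mp h2 i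
    have h4 : ((ht (τ s))⁻¹ • F (yt (τ s))) i
        = (hf (yt (τ s)))⁻¹ * fRic I AV π AC (yt (τ s)) w i := rfl
    rw [h4] at h3
    exact h3
  -- derivative for s > 0
  have hxd_pos : ∀ s : ℝ, 0 < s → HasDerivAt x (Gv (x s)) s := by
    intro s hs
    have hchain : ∀ i, HasDerivWithinAt (fun u => phi (yt (τ u)) i)
        (Gv (phi (yt (τ s))) i) univ s := by
      intro i
      exact hasDerivWithinAt_phi_comp I AV π AC w
        (c := fun u => yt (τ u)) (fun i => ((hcomp_pos s hs i).hasDerivWithinAt)) i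
    have h4 : HasDerivAt (fun u => phi (yt (τ u))) (Gv (phi (yt (τ s)))) s :=
      hasDerivAt_pi.mpr fun i => hasDerivWithinAt_univ.mp (hchain i)
    have hev : ∀ᶠ u in nhds s, x u = phi (yt (τ u)) := by
      filter_upwards [isOpen_Ioi.eventually_mem (hs : s ∈ Ioi 0)] with u hu
      exact hxnn u (le_of_lt hu)
    rw [show x s = phi (yt (τ s)) from hxnn s (le_of_lt hs)]
    exact h4.congr_of_eventuallyEq hev
  -- derivative at s = 0
  have hxd_zero : HasDerivAt x (Gv (x 0)) 0 := by
    have hcright : ∀ i, HasDerivWithinAt (fun u => yt (τ u) i)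
        ((hf (yt (τ 0)))⁻¹ * fRic I AV π AC (yt (τ 0)) w i) (Ici 0) 0 := by
      intro i
      have hy0' : HasDerivAt y (F (y (τ 0))) (τ 0) := by
        rw [hτzero]
        exact hyd 0 le_rfl (by rw [ENNReal.ofReal_zero]; exact hT0)
      have h1 : HasDerivWithinAt (y ∘ τ) ((ht (τ 0))⁻¹ • F (y (τ 0))) (Ici 0) 0 :=
        HasDerivWithinAt.scomp (0:ℝ) hy0'.hasDerivWithinAt ((hτd 0).hasDerivWithinAt)
          (mapsTo_univ _ _)
      have h2 : HasDerivWithinAt (fun u => yt (τ u)) ((ht (τ 0))⁻¹ • F (y (τ 0))) (Ici 0) 0 := by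
        apply h1.congr
        · intro u hu
          exact hytnn (τ u) (hτ0 u hu)
        · exact hytnn (τ 0) (hτ0 0 le_rfl)
      have h3 := hasDerivWithinAt_pi.mp h2 i
      have h4 : ((ht (τ 0))⁻¹ • F (y (τ 0))) i
          = (hf (yt (τ 0)))⁻¹ * fRic I AV π AC (yt (τ 0)) w i := by
        rw [← hytnn (τ 0) (hτ0 0 le_rfl)]
        rfl
      rw [h4] at h3
      exact h3
    have hchain0 : ∀ i, HasDerivWithinAt (fun u => phi (yt (τ u)) i)
        (Gv (phi (yt (τ 0))) i) (Ici 0) 0 :=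
      fun i => hasDerivWithinAt_phi_comp I AV π AC w (c := fun u => yt (τ u)) hcright i
    have hright : HasDerivWithinAt x (Gv (x 0)) (Ici 0) 0 := by
      have h5 : HasDerivWithinAt (fun u => phi (yt (τ u))) (Gv (phi (yt (τ 0)))) (Ici 0) 0 :=
        hasDerivWithinAt_pi.mpr hchain0
      have h6 : HasDerivWithinAt x (Gv (phi (yt (τ 0)))) (Ici 0) 0 := by
        apply h5.congr
        · intro u hu
          exact hxnn u hu
        · exact hxnn 0 le_rfl
      rw [show x 0 = phi (yt (τ 0)) from hxnn 0 le_rfl]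
      exact h6
    have hleft : HasDerivWithinAt x (Gv (x 0)) (Iic 0) 0 := by
      have hlin : HasDerivAt (fun u : ℝ => phi v + u • Gv (phi v)) (Gv (phi v)) 0 := by
        apply hasDerivAt_pi.mpr
        intro i
        have h7 : HasDerivAt (fun u : ℝ => phi v i + u * Gv (phi v) i) (Gv (phi v) i) 0 :=
          (hasDerivAt_mul_const _).const_add _
        exact h7
      have h8 : HasDerivWithinAt x (Gv (phi v)) (Iic 0) 0 := by
        apply hlin.hasDerivWithinAt.congr
        · intro u hu
          rcases lt_or_eq_of_le (mem_Iic.mp hu) with h | h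
          · simp only [hxdef]
            rw [if_pos h]
          · rw [h, hx0, zero_smul, add_zero]
        · rw [hx0, zero_smul, add_zero]
      rw [hx0]
      exact h8
    have h9 := hleft.union hright
    rw [Iic_union_Ici] at h9
    exact hasDerivWithinAt_univ.mp h9
  refine ⟨x, ?_, ?_, ?_, ?_⟩
  · rw [hx0]
    rfl
  · intro s hs
    rcases eq_or_lt_of_le hs with h | h
    · exact h ▸ hxd_zero
    · exact hxd_pos s h
  · intro s hs
    rw [hxnn s hs]
    exact esq_phi_lt_one (yt (τ s))
  · -- the lifetime identity
    have hval : ∀ s : ℝ, 0 ≤ s → 1 - (∑ j, (x s j) ^ 2) ^ 2 = (ht (τ s))⁻¹ := by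
      intro s hs
      rw [hxnn s hs]
      exact one_sub_sq_esq_phi (yt (τ s))
    have hgc : Continuous (fun s => (ht (τ s))⁻¹) := by
      apply Continuous.inv₀
      · rw [continuous_iff_continuousAt]
        intro s
        exact (hhtc (τ s) (hτΩ s)).comp hτcont.continuousAt
      · exact fun s => ne_of_gt (hhtpos (τ s))
    have hFTC : ∀ A : ℝ, (∫ s in (0:ℝ)..A, (ht (τ s))⁻¹) = τ A := by
      intro A
      have h1 : (∫ s in (0:ℝ)..A, (ht (τ s))⁻¹) = τ A - τ 0 :=
        intervalIntegral.integral_eq_sub_of_hasDerivAt (fun s _ => hτd s)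
          (hgc.intervalIntegrable 0 A)
      rw [h1, hτzero, sub_zero]
    have hgm : Measurable (fun s => ENNReal.ofReal ((ht (τ s))⁻¹)) :=
      ENNReal.measurable_ofReal.comp hgc.measurable
    have hcong : (∫⁻ s in Ioi (0:ℝ), ENNReal.ofReal (1 - (∑ j, (x s j) ^ 2) ^ 2))
        = ∫⁻ s in Ioi (0:ℝ), ENNReal.ofReal ((ht (τ s))⁻¹) := by
      apply MeasureTheory.setLIntegral_congr_fun measurableSet_Ioi
      intro s hs
      simp only [hval s (le_of_lt hs)]
    have hsplit : (∫⁻ s in Ioi (0:ℝ), ENNReal.ofReal ((ht (τ s))⁻¹))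
        = ⨆ k : ℕ, ENNReal.ofReal (τ k) := by
      set fn : ℕ → ℝ → ℝ≥0∞ :=
        fun k => (Ioc (0:ℝ) k).indicator (fun s => ENNReal.ofReal ((ht (τ s))⁻¹)) with hfndef
      have hfnmeas : ∀ k, Measurable (fn k) := fun k => hgm.indicator measurableSet_Ioc
      have hfnmono : Monotone fn := by
        intro a b hab
        exact Set.indicator_le_indicator_of_subset
          (Ioc_subset_Ioc_right (Nat.cast_le.mpr hab)) (fun s => zero_le) 
      have hlim : (fun s => ⨆ k, fn k s)
          = (Ioi (0:ℝ)).indicator (fun s => ENNReal.ofReal ((ht (τ s))⁻¹)) := by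
        funext s
        rcases le_or_gt s 0 with hs | hs
        · have h1 : ∀ k : ℕ, fn k s = 0 := fun k =>
            Set.indicator_of_notMem
              (show s ∉ Ioc (0:ℝ) (k:ℝ) from fun hc => absurd hc.1 (not_lt.mpr hs)) _
          rw [Set.indicator_of_notMem (show s ∉ Ioi (0:ℝ) from not_lt.mpr hs)]
          simp [h1]
        · obtain ⟨k, hk⟩ := exists_nat_ge s
          rw [Set.indicator_of_mem (show s ∈ Ioi (0:ℝ) from hs)]
          apply le_antisymm
          · apply iSup_le
            intro j
            exact Set.indicator_le_self _ _ s
          · refine le_iSup_of_le k ?_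
            have hin : s ∈ Ioc (0:ℝ) (k:ℝ) := ⟨hs, hk⟩
            have hmem : fn k s = ENNReal.ofReal ((ht (τ s))⁻¹) := by
              simp only [hfndef]
              rw [Set.indicator_of_mem hin]
            rw [hmem]
      have h2 : (∫⁻ s in Ioi (0:ℝ), ENNReal.ofReal ((ht (τ s))⁻¹))
          = ∫⁻ s, (Ioi (0:ℝ)).indicator (fun s => ENNReal.ofReal ((ht (τ s))⁻¹)) s := 
        (MeasureTheory.lintegral_indicator measurableSet_Ioi _).symm
      rw [h2, ← hlim, MeasureTheory.lintegral_iSup hfnmeas hfnmono]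
      congr 1
      funext k
      have h3 : (∫⁻ s, fn k s) = ∫⁻ s in Ioc (0:ℝ) k, ENNReal.ofReal ((ht (τ s))⁻¹) :=
        MeasureTheory.lintegral_indicator measurableSet_Ioc _
      have hInteg : MeasureTheory.IntegrableOn (fun s => (ht (τ s))⁻¹) (Ioc (0:ℝ) k) :=
        (hgc.integrableOn_Icc).mono_set Set.Ioc_subset_Icc_self
      have h4 : ENNReal.ofReal (∫ s in Ioc (0:ℝ) k, (ht (τ s))⁻¹)
          = ∫⁻ s in Ioc (0:ℝ) k, ENNReal.ofReal ((ht (τ s))⁻¹) :=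
        MeasureTheory.ofReal_integral_eq_lintegral_ofReal hInteg
          (Filter.Eventually.of_forall (fun s => le_of_lt (by
            have := hhtpos (τ s)
            positivity)))
      have h5 : (∫ s in Ioc (0:ℝ) k, (ht (τ s))⁻¹) = τ k := by
        rw [← intervalIntegral.integral_of_le (by positivity : (0:ℝ) ≤ (k:ℝ))]
        exact hFTC k
      rw [h3, ← h4, h5]
    have hsup : (⨆ k : ℕ, ENNReal.ofReal (τ k)) = Tstar := by
      apply le_antisymm
      · apply iSup_le
        intro k
        exact le_of_lt (hτΩ (k:ℝ))
      · by_contra hcon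
        push_neg at hcon
        obtain ⟨c, h1, h2⟩ := exists_between hcon
        have hcne : c ≠ ⊤ := ne_top_of_lt h2
        set r : ℝ := c.toReal with hrdef
        have hrr : ENNReal.ofReal r = c := ENNReal.ofReal_toReal hcne
        have hrΩ : r ∈ Ω := by
          show ENNReal.ofReal r < Tstar
          rw [hrr]
          exact h2
        have hr0 : 0 ≤ r := ENNReal.toReal_nonneg
        obtain ⟨k, hk⟩ := exists_nat_ge (σ r)
        have h3 : r ≤ τ k := by
          have h4 : τ (σ r) = r := hτσid r hrΩ
          calc r = τ (σ r) := h4.symm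
            _ ≤ τ k := hτmono.monotone hk
        have h5 : c ≤ ENNReal.ofReal (τ k) := by
          rw [← hrr]
          exact ENNReal.ofReal_le_ofReal h3
        have h6 : ENNReal.ofReal (τ k) ≤ ⨆ k : ℕ, ENNReal.ofReal (τ k) := le_iSup (fun k : ℕ => ENNReal.ofReal (τ (k:ℝ))) k
        exact absurd (lt_of_lt_of_le h1 (le_trans h5 h6)) (lt_irrefl _)
    rw [hcong, hsplit, hsup]

end MainProof

end
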